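/- For 1<p<∞, -n/p ≤ r < 0, and -n < α·p < -n - r·p, the Morrey space L_p^r(ℝ^n) embeds continuously into the weighted Lebesgue space L_p(ℝ^n, w_α) with weight w_α(x) = (1+|x|²)^{α/2}; i.e., there is a constant C such that ‖f·w_α‖_{L_p} ≤ C ‖f‖_{L_p^r} for all f ∈ L_p^r(ℝ^n). -/

import Mathlib

open MeasureTheory ENNReal Metric

noncomputable def morreyNorm (n : ℕ) (p r : ℝ)
    (g : EuclideanSpace ℝ (Fin n) → ℝ≥0∞) : ℝ≥0∞ :=
  ⨆ (x : EuclideanSpace ℝ (Fin n)) (R : ℝ) (_ : 0 < R),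
    ENNReal.ofReal (R ^ (-((n : ℝ) / p + r))) *
      (∫⁻ y in Metric.ball x R, g y ^ p) ^ (1 / p)

/-- For `1 < p < ∞`, `-n/p ≤ r < 0` and `-n < α·p < -n - r·p`, the Morrey space
`L_p^r(ℝⁿ)` embeds continuously into the weighted Lebesgue space `L_p(ℝⁿ, w_α)` with
`w_α(x) = (1+|x|²)^{α/2}`. -/
theorem morrey_embeds_weighted_Lp (n : ℕ) (hn : 0 < n) (p r α : ℝ)
    (hp : 1 < p) (hr1 : -(n : ℝ) / p ≤ r) (hr2 : r < 0)
    (hα1 : -(n : ℝ) < α * p) (hα2 : α * p < -(n : ℝ) - r * p) :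
    ∃ C : ℝ, 0 < C ∧ ∀ f : EuclideanSpace ℝ (Fin n) → ℝ,
      eLpNorm (fun x => (1 + ‖x‖ ^ 2) ^ (α / 2) * f x) (ENNReal.ofReal p) volume
        ≤ ENNReal.ofReal C * morreyNorm n p r (fun x => (‖f x‖₊ : ℝ≥0∞)) := by
  have hp0 : (0:ℝ) < p := lt_trans one_pos hp
  have hp0' : p ≠ 0 := hp0.ne'
  set e : ℝ := (n:ℝ) + r * p with he_def
  have hnp : -(n:ℝ) ≤ r * p := by
    have := (div_le_iff₀ hp0).mp hr1; linarith
  have he0 : 0 ≤ e := by simp only [he_def]; linarith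
  have hqexp : α * p + e < 0 := by simp only [he_def]; linarith
  have hα_neg : α ≤ 0 := by nlinarith
  set q : ℝ := (2:ℝ) ^ (α * p + e) with hq_def
  have hq0 : 0 < q := Real.rpow_pos_of_pos two_pos _
  have hq1 : q < 1 := Real.rpow_lt_one_of_one_lt_of_neg one_lt_two hqexp
  set K : ℝ := 1 + (2:ℝ) ^ e * (1 - q)⁻¹ with hK_def
  have hK : 0 < K := by
    have h2e : (0:ℝ) < (2:ℝ) ^ e := Real.rpow_pos_of_pos two_pos _
    have h1q : (0:ℝ) < (1 - q)⁻¹ := inv_pos.mpr (by linarith)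
    simp only [hK_def]; linarith [mul_pos h2e h1q]
  refine ⟨K ^ (1/p), Real.rpow_pos_of_pos hK _, fun f => ?_⟩
  set M := morreyNorm n p r (fun x => (‖f x‖₊ : ℝ≥0∞)) with hM
  -- ball bound
  have hball : ∀ R : ℝ, 0 < R →
      (∫⁻ y in ball (0:EuclideanSpace ℝ (Fin n)) R, (‖f y‖₊ : ℝ≥0∞) ^ p)
        ≤ ENNReal.ofReal (R ^ e) * M ^ p := by
    intro R hR
    set I := ∫⁻ y in ball (0:EuclideanSpace ℝ (Fin n)) R, (‖f y‖₊ : ℝ≥0∞) ^ p with hI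
    have h1 : ENNReal.ofReal (R ^ (-((n:ℝ)/p + r))) * I ^ (1/p) ≤ M := by
      rw [hM, morreyNorm]
      exact le_iSup_of_le 0 (le_iSup_of_le R (le_iSup_of_le hR le_rfl))
    have h2 : I ^ (1/p) ≤ ENNReal.ofReal (R ^ ((n:ℝ)/p + r)) * M := by
      calc I ^ (1/p)
          = ENNReal.ofReal (R ^ ((n:ℝ)/p + r)) *
            (ENNReal.ofReal (R ^ (-((n:ℝ)/p + r))) * I ^ (1/p)) := by
            rw [← mul_assoc, ← ENNReal.ofReal_mul (Real.rpow_pos_of_pos hR _).le,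
              ← Real.rpow_add hR, add_neg_cancel, Real.rpow_zero, ENNReal.ofReal_one, one_mul]
        _ ≤ _ := mul_le_mul_right h1 _
    have h3 := ENNReal.rpow_le_rpow h2 hp0.le
    rw [← ENNReal.rpow_mul, one_div_mul_cancel hp0', ENNReal.rpow_one,
      ENNReal.mul_rpow_of_nonneg _ _ hp0.le,
      ENNReal.ofReal_rpow_of_pos (Real.rpow_pos_of_pos hR _),
      ← Real.rpow_mul hR.le] at h3
    have hexp : ((n:ℝ)/p + r) * p = e := by field_simp; rw [he_def]; ring
    rwa [hexp] at h3
  -- weight pointwise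
  have hw_nonneg : ∀ x : EuclideanSpace ℝ (Fin n), (0:ℝ) ≤ (1 + ‖x‖ ^ 2) ^ (α / 2) := by
    intro x
    exact Real.rpow_nonneg (by positivity) _
  have hpt : ∀ x : EuclideanSpace ℝ (Fin n),
      ((‖(1 + ‖x‖ ^ 2) ^ (α / 2) * f x‖₊ : ℝ≥0∞)) ^ p
        = (ENNReal.ofReal ((1 + ‖x‖ ^ 2) ^ (α / 2))) ^ p * (‖f x‖₊ : ℝ≥0∞) ^ p := by
    intro x
    rw [nnnorm_mul, ENNReal.coe_mul, ENNReal.mul_rpow_of_nonneg _ _ hp0.le,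
      ← enorm_eq_nnnorm ((1 + ‖x‖ ^ 2) ^ (α / 2)), Real.enorm_eq_ofReal (hw_nonneg x)]
  set A : EuclideanSpace ℝ (Fin n) → ℝ≥0∞ :=
    fun x => ENNReal.ofReal ((1 + ‖x‖ ^ 2) ^ (α / 2)) with hA
  have hA1 : ∀ x, A x ^ p ≤ 1 := by
    intro x
    have h1 : (1:ℝ) ≤ 1 + ‖x‖ ^ 2 := by nlinarith [sq_nonneg ‖x‖]
    have h2 : (1 + ‖x‖ ^ 2) ^ (α / 2) ≤ 1 :=
      Real.rpow_le_one_of_one_le_of_nonpos h1 (by linarith)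
    calc A x ^ p ≤ (1:ℝ≥0∞) ^ p :=
          ENNReal.rpow_le_rpow (by simpa [hA] using ENNReal.ofReal_le_one.mpr h2) hp0.le
      _ = 1 := ENNReal.one_rpow p
  have hAk : ∀ (k : ℕ) (x : EuclideanSpace ℝ (Fin n)), (2:ℝ)^k ≤ ‖x‖ →
      A x ^ p ≤ ENNReal.ofReal ((2:ℝ) ^ ((k:ℝ) * (α * p))) := by
    intro k x hx
    have h2k : (0:ℝ) < (2:ℝ)^k := by positivity
    have hb : ((2:ℝ)^k)^2 ≤ 1 + ‖x‖^2 := by nlinarith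
    have h1 : (1 + ‖x‖ ^ 2) ^ (α / 2) ≤ (2:ℝ) ^ ((k:ℝ) * α) := by
      calc (1 + ‖x‖ ^ 2) ^ (α / 2) ≤ (((2:ℝ)^k)^2) ^ (α/2) :=
            Real.rpow_le_rpow_of_nonpos (by positivity) hb (by linarith)
        _ = (2:ℝ) ^ ((k:ℝ) * α) := by
            rw [← pow_mul, ← Real.rpow_natCast 2 (k*2),
              ← Real.rpow_mul (by norm_num : (0:ℝ) ≤ 2)]
            congr 1; push_cast; ring
    calc A x ^ p ≤ ENNReal.ofReal ((2:ℝ) ^ ((k:ℝ) * α)) ^ p :=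
          ENNReal.rpow_le_rpow (ENNReal.ofReal_le_ofReal h1) hp0.le
      _ = ENNReal.ofReal ((2:ℝ) ^ ((k:ℝ) * (α * p))) := by
          rw [ENNReal.ofReal_rpow_of_pos (Real.rpow_pos_of_pos two_pos _),
            ← Real.rpow_mul (by norm_num : (0:ℝ) ≤ 2)]
          congr 1; ring
  set T : ℕ → Set (EuclideanSpace ℝ (Fin n)) := fun j =>
    match j with
    | 0 => ball 0 1
    | (k+1) => ball (0:EuclideanSpace ℝ (Fin n)) ((2:ℝ)^(k+1)) \ ball 0 ((2:ℝ)^k) with hT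
  have hTmeas : ∀ j, MeasurableSet (T j) := by
    intro j
    match j with
    | 0 => exact measurableSet_ball
    | (k+1) => exact measurableSet_ball.diff measurableSet_ball
  have hcover : (Set.univ : Set (EuclideanSpace ℝ (Fin n))) ⊆ ⋃ j, T j := by
    intro x _
    have hex : ∃ m : ℕ, ‖x‖ < 2 ^ m := pow_unbounded_of_one_lt ‖x‖ one_lt_two
    rcases h : Nat.find hex with _ | k
    · refine Set.mem_iUnion.mpr ⟨0, ?_⟩
      have h1 := Nat.find_spec hex
      rw [h] at h1
      show x ∈ ball 0 1
      simpa [mem_ball_zero_iff] using h1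
    · refine Set.mem_iUnion.mpr ⟨k+1, ?_⟩
      have h1 := Nat.find_spec hex
      rw [h] at h1
      have h2 : ¬ ‖x‖ < 2 ^ k := Nat.find_min hex (by omega)
      exact ⟨mem_ball_zero_iff.mpr h1, fun hx => h2 (mem_ball_zero_iff.mp hx)⟩
  set c : ℕ → ℝ := fun j => match j with | 0 => 1 | (k+1) => (2:ℝ)^e * q^k with hc
  have hc_nonneg : ∀ j, 0 ≤ c j := by
    intro j
    match j with
    | 0 => norm_num [hc]
    | (k+1) =>
      show (0:ℝ) ≤ (2:ℝ)^e * q^k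
      positivity
  have hterm : ∀ j, (∫⁻ x in T j, A x ^ p * (‖f x‖₊ : ℝ≥0∞) ^ p)
      ≤ ENNReal.ofReal (c j) * M ^ p := by
    intro j
    match j with
    | 0 =>
      calc ∫⁻ x in T 0, A x ^ p * (‖f x‖₊:ℝ≥0∞) ^ p
          ≤ ∫⁻ x in T 0, (‖f x‖₊:ℝ≥0∞) ^ p :=
            setLIntegral_mono' (hTmeas 0) fun x _ => by
              calc A x ^ p * (‖f x‖₊:ℝ≥0∞) ^ p ≤ 1 * (‖f x‖₊:ℝ≥0∞) ^ p :=
                    mul_le_mul_left (hA1 x) _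
                _ = _ := one_mul _
        _ ≤ ENNReal.ofReal ((1:ℝ) ^ e) * M ^ p := hball 1 one_pos
        _ = ENNReal.ofReal (c 0) * M ^ p := by norm_num [Real.one_rpow]
    | (k+1) =>
      have hsub : T (k+1) ⊆ ball (0:EuclideanSpace ℝ (Fin n)) ((2:ℝ)^(k+1)) :=
        Set.diff_subset
      calc ∫⁻ x in T (k+1), A x ^ p * (‖f x‖₊:ℝ≥0∞) ^ p
          ≤ ∫⁻ x in T (k+1),
              ENNReal.ofReal ((2:ℝ)^((k:ℝ)*(α*p))) * (‖f x‖₊:ℝ≥0∞) ^ p := by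
            refine setLIntegral_mono' (hTmeas (k+1)) fun x hx => ?_
            have hxk : (2:ℝ)^k ≤ ‖x‖ := by
              have h2 := hx.2
              simpa [mem_ball_zero_iff, not_lt] using h2
            exact mul_le_mul_left (hAk k x hxk) _
        _ = ENNReal.ofReal ((2:ℝ)^((k:ℝ)*(α*p))) *
              ∫⁻ x in T (k+1), (‖f x‖₊:ℝ≥0∞) ^ p :=
            lintegral_const_mul' _ _ ENNReal.ofReal_ne_top
        _ ≤ ENNReal.ofReal ((2:ℝ)^((k:ℝ)*(α*p))) *
              (ENNReal.ofReal (((2:ℝ)^(k+1)) ^ e) * M ^ p) :=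
            mul_le_mul_right ((lintegral_mono_set hsub).trans (hball _ (by positivity))) _
        _ = ENNReal.ofReal (c (k+1)) * M ^ p := by
            rw [← mul_assoc, ← ENNReal.ofReal_mul (Real.rpow_nonneg (by norm_num) _)]
            congr 2
            show (2:ℝ)^((k:ℝ)*(α*p)) * ((2:ℝ)^(k+1)) ^ e = (2:ℝ)^e * q^k
            rw [hq_def, ← Real.rpow_natCast ((2:ℝ)^(α*p+e)) k,
              ← Real.rpow_mul (by norm_num : (0:ℝ) ≤ 2),
              ← Real.rpow_natCast (2:ℝ) (k+1),
              ← Real.rpow_mul (by norm_num : (0:ℝ) ≤ 2),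
              ← Real.rpow_add two_pos, ← Real.rpow_add two_pos]
            congr 1; push_cast; ring
  have hsumc : Summable c := by
    rw [← summable_nat_add_iff 1]
    have : (fun k => c (k+1)) = fun k => (2:ℝ)^e * q^k := rfl
    rw [this]
    exact (summable_geometric_of_lt_one hq0.le hq1).mul_left _
  have htsum : ∑' j, c j = K := by
    rw [Summable.tsum_eq_zero_add hsumc]
    show (1:ℝ) + ∑' k, (2:ℝ)^e * q^k = K
    rw [tsum_mul_left, tsum_geometric_of_lt_one hq0.le hq1]
  have hmain : (∫⁻ x, ((‖(1 + ‖x‖ ^ 2) ^ (α / 2) * f x‖₊ : ℝ≥0∞)) ^ p)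
      ≤ ENNReal.ofReal K * M ^ p := by
    calc ∫⁻ x, (‖(1 + ‖x‖ ^ 2) ^ (α / 2) * f x‖₊ : ℝ≥0∞) ^ p
        = ∫⁻ x, A x ^ p * (‖f x‖₊ : ℝ≥0∞) ^ p := lintegral_congr hpt
      _ = ∫⁻ x in Set.univ, A x ^ p * (‖f x‖₊ : ℝ≥0∞) ^ p := by
          rw [Measure.restrict_univ]
      _ ≤ ∫⁻ x in ⋃ j, T j, A x ^ p * (‖f x‖₊ : ℝ≥0∞) ^ p := lintegral_mono_set hcover
      _ ≤ ∑' j, ∫⁻ x in T j, A x ^ p * (‖f x‖₊ : ℝ≥0∞) ^ p := lintegral_iUnion_le _ _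
      _ ≤ ∑' j, ENNReal.ofReal (c j) * M ^ p := ENNReal.tsum_le_tsum hterm
      _ = (∑' j, ENNReal.ofReal (c j)) * M ^ p := ENNReal.tsum_mul_right
      _ = ENNReal.ofReal K * M ^ p := by
          rw [← ENNReal.ofReal_tsum_of_nonneg hc_nonneg hsumc, htsum]
  rw [eLpNorm_eq_lintegral_rpow_enorm_toReal
    (ne_of_gt (ENNReal.ofReal_pos.mpr hp0)) ENNReal.ofReal_ne_top,
    ENNReal.toReal_ofReal hp0.le]
  calc (∫⁻ x, (‖(1 + ‖x‖ ^ 2) ^ (α / 2) * f x‖₊ : ℝ≥0∞) ^ p) ^ (1/p)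
      ≤ (ENNReal.ofReal K * M ^ p) ^ (1/p) :=
        ENNReal.rpow_le_rpow hmain (by positivity)
    _ = ENNReal.ofReal (K ^ (1/p)) * M := by
        rw [ENNReal.mul_rpow_of_nonneg _ _ (by positivity), ← ENNReal.rpow_mul,
          mul_one_div_cancel hp0', ENNReal.rpow_one, ENNReal.ofReal_rpow_of_pos hK]
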